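/- There is a constant C > 0 such that for all N ∈ ℕ, all β ∈ [1/2, 1], and all ξ ∈ [−1/2, 1/2] with ξ ≠ 0, one has |M̂_N^β(ξ)| ≤ C (N|ξ|)⁻¹. -/

import Mathlib

open scoped BigOperators

/-- The multiplier `M̂_N^β(ξ) = (1/N) Σ_{n=1}^N ((n^β − (n−1)^β)/β) e^{2πi ξ n}`. -/
noncomputable def Mhat (β : ℝ) (N : ℕ) (ξ : ℝ) : ℂ :=
  ((N : ℂ))⁻¹ * ∑ n ∈ Finset.Icc 1 N,
    (((((n : ℝ) ^ β - ((n : ℝ) - 1) ^ β) / β) : ℝ) : ℂ) *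
      Complex.exp (2 * Real.pi * Complex.I * ξ * n)

/-- Lower bound on `|e^{2πiξ} - 1|`. -/
lemma norm_exp_sub_one_ge (ξ : ℝ) (h1 : |ξ| ≤ 1 / 2) :
    4 * |ξ| ≤ ‖Complex.exp (2 * Real.pi * Complex.I * ξ) - 1‖ := by
  have hθ : (2 * Real.pi * Complex.I * ξ) = ((2 * Real.pi * ξ : ℝ) : ℂ) * Complex.I := by
    push_cast; ring
  rw [hθ, Complex.exp_mul_I]
  have hc : (Complex.cos ((2 * Real.pi * ξ : ℝ) : ℂ)) = ((Real.cos (2 * Real.pi * ξ) : ℝ) : ℂ) :=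
    (Complex.ofReal_cos _).symm
  have hs : (Complex.sin ((2 * Real.pi * ξ : ℝ) : ℂ)) = ((Real.sin (2 * Real.pi * ξ) : ℝ) : ℂ) :=
    (Complex.ofReal_sin _).symm
  rw [hc, hs]
  have : ((Real.cos (2 * Real.pi * ξ) : ℝ) : ℂ) + ((Real.sin (2 * Real.pi * ξ) : ℝ) : ℂ) * Complex.I - 1
      = ((Real.cos (2 * Real.pi * ξ) - 1 : ℝ) : ℂ) + ((Real.sin (2 * Real.pi * ξ) : ℝ) : ℂ) * Complex.I := by
    push_cast; ring
  rw [this, Complex.norm_add_mul_I]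
  set θ := 2 * Real.pi * ξ with hθdef
  have hcos : Real.cos θ ≤ 1 - 2 / Real.pi ^ 2 * θ ^ 2 := by
    apply Real.cos_le_one_sub_mul_cos_sq
    have : |θ| = 2 * Real.pi * |ξ| := by
      rw [hθdef, abs_mul, abs_of_nonneg (by positivity : (0:ℝ) ≤ 2 * Real.pi)]
    rw [this]
    nlinarith [Real.pi_pos]
  have hpi : (0:ℝ) < Real.pi := Real.pi_pos
  have key : (4 * |ξ|) ^ 2 ≤ (Real.cos θ - 1) ^ 2 + Real.sin θ ^ 2 := by
    have hsin : Real.sin θ ^ 2 = 1 - Real.cos θ ^ 2 := by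
      have := Real.sin_sq_add_cos_sq θ; linarith
    have hθ2 : θ ^ 2 = 4 * Real.pi ^ 2 * ξ ^ 2 := by rw [hθdef]; ring
    have hcos' : Real.cos θ ≤ 1 - 8 * ξ ^ 2 := by
      have h2 : 2 / Real.pi ^ 2 * θ ^ 2 = 8 * ξ ^ 2 := by
        rw [hθ2]; field_simp; ring
      linarith
    have hc1 : Real.cos θ ≤ 1 := Real.cos_le_one θ
    have heq : (Real.cos θ - 1) ^ 2 + Real.sin θ ^ 2 = 2 - 2 * Real.cos θ := by
      rw [hsin]; ring
    rw [heq]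
    nlinarith [sq_abs ξ]
  calc 4 * |ξ| = Real.sqrt ((4 * |ξ|) ^ 2) := by
        rw [Real.sqrt_sq (by positivity)]
    _ ≤ Real.sqrt ((Real.cos θ - 1) ^ 2 + Real.sin θ ^ 2) := Real.sqrt_le_sqrt key

/-- Bound for the geometric partial sums. -/
lemma geom_bound (ξ : ℝ) (h0 : ξ ≠ 0) (h1 : |ξ| ≤ 1 / 2) (k : ℕ) :
    ‖∑ i ∈ Finset.range k, Complex.exp (2 * Real.pi * Complex.I * ξ) ^ (i + 1)‖
      ≤ (2 * |ξ|)⁻¹ := by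
  set z := Complex.exp (2 * Real.pi * Complex.I * ξ) with hz
  have hzne : z ≠ 1 := by
    intro h
    rw [Complex.exp_eq_one_iff] at h
    obtain ⟨n, hn⟩ := h
    have : (ξ : ℂ) = (n : ℂ) := by
      have hI : (2 : ℂ) * Real.pi * Complex.I ≠ 0 := by
        simp [Complex.I_ne_zero, Real.pi_ne_zero]
      have h2 : (2 : ℂ) * Real.pi * Complex.I * ξ = (2 : ℂ) * Real.pi * Complex.I * n := by
        rw [hn]; ring
      exact mul_left_cancel₀ hI h2
    have hξn : ξ = (n : ℝ) := by exact_mod_cast this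
    have hn0 : n ≠ 0 := by rintro rfl; exact h0 (by simpa using hξn)
    have h1' : (1:ℝ) ≤ |ξ| := by
      rw [hξn, ← Int.cast_abs]
      exact_mod_cast Int.one_le_abs hn0
    linarith
  have hsum : ∑ i ∈ Finset.range k, z ^ (i + 1) = z * ((z ^ k - 1) / (z - 1)) := by
    rw [← geom_sum_eq hzne, Finset.mul_sum]
    exact Finset.sum_congr rfl fun i _ => pow_succ' z i
  have hznorm : ‖z‖ = 1 := by
    have hθ : (2 * Real.pi * Complex.I * ξ) = ((2 * Real.pi * ξ : ℝ) : ℂ) * Complex.I := by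
      push_cast; ring
    rw [hz, hθ, Complex.norm_exp_ofReal_mul_I]
  have hden : 4 * |ξ| ≤ ‖z - 1‖ := norm_exp_sub_one_ge ξ h1
  have habs : (0:ℝ) < |ξ| := abs_pos.mpr h0
  rw [hsum, norm_mul, hznorm, one_mul, norm_div]
  have hnum : ‖z ^ k - 1‖ ≤ 2 := by
    calc ‖z ^ k - 1‖ ≤ ‖z ^ k‖ + ‖(1:ℂ)‖ := norm_sub_le _ _
      _ = 2 := by rw [norm_pow, hznorm, one_pow, norm_one]; norm_num
  have hdenpos : (0:ℝ) < ‖z - 1‖ := lt_of_lt_of_le (by positivity) hden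
  rw [div_le_iff₀ hdenpos]
  calc ‖z ^ k - 1‖ ≤ 2 := hnum
    _ = (2 * |ξ|)⁻¹ * (4 * |ξ|) := by field_simp; ring
    _ ≤ (2 * |ξ|)⁻¹ * ‖z - 1‖ := by
        apply mul_le_mul_of_nonneg_left hden (by positivity)

theorem stmt_9 :
    ∃ C : ℝ, 0 < C ∧
      ∀ (N : ℕ), 1 ≤ N →
        ∀ (β : ℝ), 1 / 2 ≤ β → β ≤ 1 →
          ∀ (ξ : ℝ), ξ ∈ Set.Icc (-(1 / 2) : ℝ) (1 / 2) → ξ ≠ 0 →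
            ‖Mhat β N ξ‖ ≤ C * ((N : ℝ) * |ξ|)⁻¹ := by
  refine ⟨1, one_pos, ?_⟩
  intro N hN β hβ1 hβ2 ξ hξ hξ0
  have hβ0 : (0:ℝ) < β := by linarith
  have habs : |ξ| ≤ 1 / 2 := abs_le.mpr ⟨by linarith [hξ.1], hξ.2⟩
  have habs0 : (0:ℝ) < |ξ| := abs_pos.mpr hξ0
  set z : ℂ := Complex.exp (2 * Real.pi * Complex.I * ξ) with hzdef
  set a : ℕ → ℝ := fun n => (((n:ℝ)) ^ β - ((n:ℝ) - 1) ^ β) / β with hadef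
  -- basic facts about a
  have ha_nonneg : ∀ n : ℕ, 1 ≤ n → 0 ≤ a n := by
    intro n hn
    have h0 : (0:ℝ) ≤ (n:ℝ) - 1 := by
      have : (1:ℝ) ≤ (n:ℝ) := by exact_mod_cast hn
      linarith
    have : ((n:ℝ) - 1) ^ β ≤ (n:ℝ) ^ β :=
      Real.rpow_le_rpow h0 (by linarith) hβ0.le
    simp only [hadef]
    exact div_nonneg (by linarith) hβ0.le
  have ha_anti : ∀ n : ℕ, 1 ≤ n → a (n + 1) ≤ a n := by
    intro n hn
    have h0 : (0:ℝ) ≤ (n:ℝ) - 1 := by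
      have : (1:ℝ) ≤ (n:ℝ) := by exact_mod_cast hn
      linarith
    -- concavity: ((n-1)^β + (n+1)^β)/2 ≤ n^β
    have hconc := (Real.concaveOn_rpow hβ0.le hβ2).2
      (Set.mem_Ici.mpr h0) (Set.mem_Ici.mpr (by linarith : (0:ℝ) ≤ (n:ℝ) + 1))
      (by norm_num : (0:ℝ) ≤ (1/2:ℝ)) (by norm_num : (0:ℝ) ≤ (1/2:ℝ)) (by norm_num)
    have hmid : (1/2 : ℝ) • ((n:ℝ) - 1) + (1/2 : ℝ) • ((n:ℝ) + 1) = (n:ℝ) := by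
      simp [smul_eq_mul]; ring
    rw [hmid] at hconc
    simp only [smul_eq_mul] at hconc
    have key : ((n:ℝ) + 1) ^ β + ((n:ℝ) - 1) ^ β ≤ 2 * (n:ℝ) ^ β := by linarith
    simp only [hadef]
    rw [div_le_div_iff_of_pos_right hβ0]
    push_cast
    have : ((n:ℝ) + 1 - 1) = (n:ℝ) := by ring
    rw [this]
    linarith
  have ha1 : a 1 = β⁻¹ := by
    simp only [hadef]
    norm_num [Real.zero_rpow hβ0.ne']
  -- rewrite the sum
  have hz_pow : ∀ n : ℕ, Complex.exp (2 * Real.pi * Complex.I * ξ * n) = z ^ n := by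
    intro n
    rw [hzdef, ← Complex.exp_nat_mul]
    congr 1
    ring
  have hsum_eq : (∑ n ∈ Finset.Icc 1 N,
      (((((n : ℝ) ^ β - ((n : ℝ) - 1) ^ β) / β) : ℝ) : ℂ) *
        Complex.exp (2 * Real.pi * Complex.I * ξ * n))
      = ∑ i ∈ Finset.range N, ((a (i + 1) : ℝ) : ℂ) * z ^ (i + 1) := by
    rw [← Finset.Ico_add_one_right_eq_Icc, Finset.sum_Ico_eq_sum_range]
    refine Finset.sum_congr (by norm_num) fun i _ => ?_
    rw [hz_pow]
    simp only [hadef]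
    norm_num [add_comm 1 i]
  -- summation by parts
  have hby := Finset.sum_range_by_parts (fun i => ((a (i + 1) : ℝ) : ℂ))
    (fun i => z ^ (i + 1)) N
  simp only [smul_eq_mul] at hby
  -- bound
  have hG : ∀ k : ℕ, ‖∑ i ∈ Finset.range k, z ^ (i + 1)‖ ≤ (2 * |ξ|)⁻¹ :=
    fun k => geom_bound ξ hξ0 habs k
  have hNpos : (0:ℝ) < (N:ℝ) := by exact_mod_cast hN
  have hterm1 : ‖((a (N - 1 + 1) : ℝ) : ℂ) * ∑ i ∈ Finset.range N, z ^ (i + 1)‖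
      ≤ a (N - 1 + 1) * (2 * |ξ|)⁻¹ := by
    rw [norm_mul, Complex.norm_real, Real.norm_eq_abs,
      abs_of_nonneg (ha_nonneg _ (Nat.le_add_left 1 _))]
    exact mul_le_mul_of_nonneg_left (hG N) (ha_nonneg _ (Nat.le_add_left 1 _))
  have hterm2 : ‖∑ i ∈ Finset.range (N - 1),
      (((a (i + 1 + 1) : ℝ) : ℂ) - ((a (i + 1) : ℝ) : ℂ)) * ∑ j ∈ Finset.range (i + 1), z ^ (j + 1)‖
      ≤ (a 1 - a (N - 1 + 1)) * (2 * |ξ|)⁻¹ := by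
    calc ‖∑ i ∈ Finset.range (N - 1),
        (((a (i + 1 + 1) : ℝ) : ℂ) - ((a (i + 1) : ℝ) : ℂ)) * ∑ j ∈ Finset.range (i + 1), z ^ (j + 1)‖
        ≤ ∑ i ∈ Finset.range (N - 1), (a (i + 1) - a (i + 1 + 1)) * (2 * |ξ|)⁻¹ := by
          refine (norm_sum_le _ _).trans (Finset.sum_le_sum fun i _ => ?_)
          rw [norm_mul, ← Complex.ofReal_sub, Complex.norm_real, Real.norm_eq_abs,
            abs_of_nonpos (by linarith [ha_anti (i + 1) (Nat.le_add_left 1 _)]), neg_sub]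
          exact mul_le_mul (le_refl _) (hG (i + 1)) (norm_nonneg _)
            (by linarith [ha_anti (i + 1) (Nat.le_add_left 1 _)])
      _ = (a 1 - a (N - 1 + 1)) * (2 * |ξ|)⁻¹ := by
          rw [← Finset.sum_mul]
          congr 1
          have := Finset.sum_range_sub' (fun i => a (i + 1)) (N - 1)
          simpa using this
  have hmain : ‖((a (N - 1 + 1) : ℝ) : ℂ) * ∑ i ∈ Finset.range N, z ^ (i + 1)
      - ∑ i ∈ Finset.range (N - 1),
        (((a (i + 1 + 1) : ℝ) : ℂ) - ((a (i + 1) : ℝ) : ℂ)) * ∑ j ∈ Finset.range (i + 1), z ^ (j + 1)‖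
      ≤ a 1 * (2 * |ξ|)⁻¹ := by
    refine (norm_sub_le _ _).trans ?_
    have := add_le_add hterm1 hterm2
    calc _ ≤ a (N - 1 + 1) * (2 * |ξ|)⁻¹ + (a 1 - a (N - 1 + 1)) * (2 * |ξ|)⁻¹ := this
      _ = a 1 * (2 * |ξ|)⁻¹ := by ring
  have ha1le : a 1 ≤ 2 := by
    rw [ha1, inv_eq_one_div, div_le_iff₀ hβ0]; linarith
  have hfin : ‖((a (N - 1 + 1) : ℝ) : ℂ) * ∑ i ∈ Finset.range N, z ^ (i + 1)
      - ∑ i ∈ Finset.range (N - 1),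
        (((a (i + 1 + 1) : ℝ) : ℂ) - ((a (i + 1) : ℝ) : ℂ)) * ∑ j ∈ Finset.range (i + 1), z ^ (j + 1)‖
      ≤ 2 * (2 * |ξ|)⁻¹ :=
    hmain.trans (mul_le_mul_of_nonneg_right ha1le (by positivity))
  simp only [Mhat]
  rw [hsum_eq, hby, norm_mul, norm_inv, Complex.norm_natCast]
  refine le_trans (mul_le_mul_of_nonneg_left hfin (by positivity)) ?_
  have h2 : 2 * (2 * |ξ|)⁻¹ = |ξ|⁻¹ := by field_simp
  rw [h2, one_mul, mul_inv]
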